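/- Let φ ∈ RatFunc ℂ with deg φ := max(φ.num.natDegree, φ.denom.natDegree) = d, where d ≥ 2 and d is even, and let Φ : ℕ → RatFunc ℂ be the iterate sequence of φ. Suppose there exists B : ℕ such that for every n ≥ 1, the number of z ∈ ℂ for which 4 does not divide Polynomial.rootMultiplicity z ((Φ n).num * (Φ n).denom) is at most B. Then the set {z : ℂ | z ≠ 0 ∧ ¬ (4 ∣ Polynomial.rootMultiplicity z (φ.num * φ.denom))} has at most one element. -/

import Mathlib

open Polynomial

namespace Blemma

noncomputable section

variable {p q u v f g : ℂ[X]} {d : ℕ}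

lemma no_common_root (h : IsCoprime p q) {z : ℂ} (hp : p.eval z = 0) : q.eval z ≠ 0 := by
  obtain ⟨s, t, hst⟩ := h
  intro hq
  have := congrArg (Polynomial.eval z) hst
  simp [hp, hq] at this

lemma coprime_of_no_common_root (hp : p ≠ 0)
    (h : ∀ z : ℂ, p.eval z = 0 → q.eval z ≠ 0) : IsCoprime p q := by
  classical
  rw [← EuclideanDomain.gcd_isUnit_iff]
  by_contra hg
  have hg0 : EuclideanDomain.gcd p q ≠ 0 := by
    intro h0
    exact hp (EuclideanDomain.gcd_eq_zero_iff.mp h0).1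
  have hdeg : (EuclideanDomain.gcd p q).degree ≠ 0 := by
    intro h0
    exact hg (isUnit_iff_degree_eq_zero.mpr h0)
  obtain ⟨z, hz⟩ := IsAlgClosed.exists_root _ hdeg
  have hzp : p.eval z = 0 := by
    obtain ⟨c, hc⟩ := EuclideanDomain.gcd_dvd_left p q
    rw [hc, eval_mul, hz.eq_zero, zero_mul]
  have hzq : q.eval z = 0 := by
    obtain ⟨c, hc⟩ := EuclideanDomain.gcd_dvd_right p q
    rw [hc, eval_mul, hz.eq_zero, zero_mul]
  exact h z hzp hzq

lemma rootMultiplicity_multiset_prod (w : ℂ) (s : Multiset ℂ[X]) (hs : (0 : ℂ[X]) ∉ s) :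
    rootMultiplicity w s.prod = (s.map (rootMultiplicity w)).sum := by
  classical
  rw [← Polynomial.count_roots, Polynomial.roots_multiset_prod _ hs, Multiset.count_bind]
  congr 1
  exact Multiset.map_congr rfl fun f _ => Polynomial.count_roots f

lemma multiset_sum_eq (R : Multiset ℂ) (f : ℂ → ℕ) (a : ℂ)
    (h : ∀ r ∈ R, r ≠ a → f r = 0) :
    (R.map f).sum = R.count a * f a := by
  classical
  induction R using Multiset.induction_on with
  | empty => simp
  | cons r R ih =>
    rw [Multiset.map_cons, Multiset.sum_cons, Multiset.count_cons,
      ih (fun x hx hxa => h x (Multiset.mem_cons_of_mem hx) hxa)]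
    by_cases hra : r = a
    · subst hra; simp; ring
    · rw [h r (Multiset.mem_cons_self r R) hra, if_neg (by simpa using fun h' => hra h'.symm)]
      ring

lemma dvd_wronskian_aux {w : ℂ} {e : ℕ} (h : (X - C w) ^ e ∣ f) :
    (X - C w) ^ (e - 1) ∣ f * derivative g - derivative f * g := by
  obtain ⟨h₁, rfl⟩ := h
  have hf : (X - C w) ^ (e - 1) ∣ (X - C w) ^ e * h₁ :=
    Dvd.dvd.mul_right (pow_dvd_pow _ (Nat.sub_le e 1)) h₁
  have hf' : (X - C w) ^ (e - 1) ∣ derivative ((X - C w) ^ e * h₁) := by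
    rw [derivative_mul, derivative_pow, derivative_X_sub_C]
    exact dvd_add ⟨C (e : ℂ) * h₁, by ring⟩
      ((pow_dvd_pow _ (Nat.sub_le e 1)).mul_right (derivative h₁))
  exact dvd_sub (hf.mul_right _) (hf'.mul_right _)

lemma wronskian_deg (f g : ℂ[X]) :
    (f * derivative g - derivative f * g).natDegree ≤ f.natDegree + g.natDegree - 1 := by
  by_cases hf0 : f.natDegree = 0
  · obtain ⟨c, rfl⟩ := Polynomial.natDegree_eq_zero.mp hf0
    rw [derivative_C, zero_mul, sub_zero]
    refine (natDegree_mul_le).trans ?_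
    simp only [natDegree_C, zero_add]
    have := natDegree_derivative_le g
    omega
  by_cases hg0 : g.natDegree = 0
  · obtain ⟨c, rfl⟩ := Polynomial.natDegree_eq_zero.mp hg0
    rw [derivative_C, mul_zero, zero_sub]
    rw [natDegree_neg]
    refine (natDegree_mul_le).trans ?_
    simp only [natDegree_C, add_zero]
    have := natDegree_derivative_le f
    omega
  refine (natDegree_sub_le _ _).trans (max_le ?_ ?_)
  · refine (natDegree_mul_le).trans ?_
    have := natDegree_derivative_le g
    omega
  · refine (natDegree_mul_le).trans ?_
    have := natDegree_derivative_le f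
    omega

lemma fiber_count (f : ℂ[X]) (hf : f ≠ 0) (bad : Finset ℂ) (lam : ℕ)
    (h : ∀ w : ℂ, f.eval w = 0 → w ∉ bad → lam ≤ rootMultiplicity w f) :
    lam * f.roots.toFinset.card ≤ lam * bad.card + f.natDegree := by
  classical
  have hdeg : f.natDegree = ∑ w ∈ f.roots.toFinset, rootMultiplicity w f := by
    conv_lhs => rw [← Polynomial.splits_iff_card_roots.mp (IsAlgClosed.splits f)]
    rw [← Multiset.toFinset_sum_count_eq]
    exact Finset.sum_congr rfl fun w _ => (Polynomial.count_roots f)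
  set good := f.roots.toFinset \ bad with hgood
  have h1 : f.roots.toFinset.card ≤ good.card + bad.card := by
    have := Finset.card_le_card (Finset.sdiff_subset (s := f.roots.toFinset) (t := bad))
    have h2 : f.roots.toFinset ⊆ good ∪ bad := by
      intro w hw
      by_cases hwb : w ∈ bad
      · exact Finset.mem_union_right _ hwb
      · exact Finset.mem_union_left _ (Finset.mem_sdiff.mpr ⟨hw, hwb⟩)
    calc f.roots.toFinset.card ≤ (good ∪ bad).card := Finset.card_le_card h2
      _ ≤ good.card + bad.card := Finset.card_union_le _ _
  have h2 : lam * good.card ≤ f.natDegree := by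
    rw [hdeg]
    calc lam * good.card = ∑ _w ∈ good, lam := by rw [Finset.sum_const, smul_eq_mul, mul_comm]
      _ ≤ ∑ w ∈ good, rootMultiplicity w f := by
          refine Finset.sum_le_sum fun w hw => ?_
          obtain ⟨hw1, hw2⟩ := Finset.mem_sdiff.mp hw
          refine h w ?_ hw2
          have : w ∈ f.roots := Multiset.mem_toFinset.mp hw1
          exact (Polynomial.isRoot_of_mem_roots this)
      _ ≤ ∑ w ∈ f.roots.toFinset, rootMultiplicity w f :=
          Finset.sum_le_sum_of_subset Finset.sdiff_subset
  calc lam * f.roots.toFinset.card ≤ lam * (good.card + bad.card) :=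
        Nat.mul_le_mul_left _ h1
    _ = lam * good.card + lam * bad.card := by ring
    _ ≤ f.natDegree + lam * bad.card := by omega
    _ = lam * bad.card + f.natDegree := by omega

noncomputable def step (u : ℂ[X]) (d : ℕ) (p q : ℂ[X]) : ℂ[X] :=
  C u.leadingCoeff * q ^ (d - u.natDegree) *
    (u.roots.map (fun r => p - C r * q)).prod

variable {p q u v : ℂ[X]} {d : ℕ}

lemma factor_ne_zero (hcop : IsCoprime p q) (hM : 1 ≤ max p.natDegree q.natDegree)
    (r : ℂ) : p - C r * q ≠ 0 := by
  intro h
  have hpq : p = C r * q := sub_eq_zero.mp h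
  have hqu : IsUnit q := hcop.isUnit_of_dvd' ⟨C r, by rw [hpq]; ring⟩ dvd_rfl
  have hq0 : q.natDegree = 0 := natDegree_eq_zero_of_isUnit hqu
  have hp0 : p.natDegree = 0 := by
    rw [hpq]
    refine Nat.le_antisymm (natDegree_mul_le.trans ?_) (Nat.zero_le _)
    simp [hq0]
  omega

lemma zero_not_mem_factors (hcop : IsCoprime p q) (hM : 1 ≤ max p.natDegree q.natDegree) :
    (0 : ℂ[X]) ∉ u.roots.map (fun r => p - C r * q) := by
  intro h
  obtain ⟨r, _, hr⟩ := Multiset.mem_map.mp h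
  exact factor_ne_zero hcop hM r (by rw [hr])

lemma step_ne_zero (hu : u ≠ 0) (hq : q ≠ 0) (hcop : IsCoprime p q)
    (hM : 1 ≤ max p.natDegree q.natDegree) : step u d p q ≠ 0 := by
  refine mul_ne_zero (mul_ne_zero ?_ (pow_ne_zero _ hq)) ?_
  · simpa using leadingCoeff_ne_zero.mpr hu
  · exact Multiset.prod_ne_zero (zero_not_mem_factors hcop hM)

lemma step_rootMult {w a : ℂ} (hu : u ≠ 0) (hq : q ≠ 0) (hcop : IsCoprime p q)
    (hM : 1 ≤ max p.natDegree q.natDegree)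
    (hqw : q.eval w ≠ 0) (hpw : p.eval w = a * q.eval w) :
    rootMultiplicity w (step u d p q) =
      rootMultiplicity a u * rootMultiplicity w (p - C a * q) := by
  classical
  have h1 : C u.leadingCoeff * q ^ (d - u.natDegree) ≠ 0 := by
    refine mul_ne_zero ?_ (pow_ne_zero _ hq)
    simpa using leadingCoeff_ne_zero.mpr hu
  have h2 := Multiset.prod_ne_zero (zero_not_mem_factors (u := u) hcop hM)
  rw [step, rootMultiplicity_mul (mul_ne_zero h1 h2), rootMultiplicity_mul h1]
  have hC : rootMultiplicity w (C u.leadingCoeff) = 0 :=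
    rootMultiplicity_eq_zero (by simpa [IsRoot] using leadingCoeff_ne_zero.mpr hu)
  have hqpow : rootMultiplicity w (q ^ (d - u.natDegree)) = 0 :=
    rootMultiplicity_eq_zero (by simp [IsRoot, hqw])
  rw [hC, hqpow, rootMultiplicity_multiset_prod w _ (zero_not_mem_factors hcop hM),
    Multiset.map_map]
  simp only [Nat.zero_add, Function.comp]
  rw [multiset_sum_eq _ _ a ?_, Polynomial.count_roots]
  intro r _ hra
  refine rootMultiplicity_eq_zero ?_
  simp only [IsRoot, eval_sub, eval_mul, eval_C, hpw]
  intro hcontra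
  apply hra
  have h0 : (r - a) * q.eval w = 0 := by linear_combination -hcontra
  rcases mul_eq_zero.mp h0 with h | h
  · exact sub_eq_zero.mp h
  · exact absurd h hqw



lemma card_roots_eq (f : ℂ[X]) : Multiset.card f.roots = f.natDegree :=
  Polynomial.splits_iff_card_roots.mp (IsAlgClosed.splits f)


lemma step_natDegree (hu : u ≠ 0) (hq : q ≠ 0)
    (h0 : (0 : ℂ[X]) ∉ u.roots.map (fun r => p - C r * q)) :
    (step u d p q).natDegree =
      (d - u.natDegree) * q.natDegree +
        ((u.roots.map (fun r => (p - C r * q).natDegree)).sum) := by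
  rw [step, natDegree_mul (mul_ne_zero (by simpa using leadingCoeff_ne_zero.mpr hu)
      (pow_ne_zero _ hq)) (Multiset.prod_ne_zero h0),
    natDegree_mul (by simpa using leadingCoeff_ne_zero.mpr hu) (pow_ne_zero _ hq),
    natDegree_C, natDegree_pow, natDegree_multiset_prod _ h0, Multiset.map_map]
  simp [Function.comp]

lemma step_natDegree_le (hu : u ≠ 0) (hq : q ≠ 0) (hdu : u.natDegree ≤ d)
    (h0 : (0 : ℂ[X]) ∉ u.roots.map (fun r => p - C r * q)) :
    (step u d p q).natDegree ≤ d * max p.natDegree q.natDegree := by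
  rw [step_natDegree hu hq h0]
  have h1 : ((u.roots.map (fun r => (p - C r * q).natDegree)).sum) ≤
      u.natDegree * max p.natDegree q.natDegree := by
    have := Multiset.sum_le_card_nsmul (u.roots.map (fun r => (p - C r * q).natDegree))
      (max p.natDegree q.natDegree) ?_
    · simpa [card_roots_eq, mul_comm] using this
    · intro x hx
      obtain ⟨r, _, rfl⟩ := Multiset.mem_map.mp hx
      refine (natDegree_sub_le _ _).trans (max_le (le_max_left _ _) ?_)
      exact le_trans (natDegree_mul_le.trans (by simp)) (le_max_right _ _)
  have h2 : (d - u.natDegree) * q.natDegree ≤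
      (d - u.natDegree) * max p.natDegree q.natDegree :=
    Nat.mul_le_mul_left _ (le_max_right _ _)
  have h3 : q.natDegree ≤ max p.natDegree q.natDegree := le_max_right _ _
  calc _ ≤ (d - u.natDegree) * max p.natDegree q.natDegree
        + u.natDegree * max p.natDegree q.natDegree := Nat.add_le_add h2 h1
    _ = d * max p.natDegree q.natDegree := by
        rw [← Nat.add_mul]; congr 1; omega

lemma step_natDegree_exact (hu : u ≠ 0) (hq : q ≠ 0) (hdu : u.natDegree ≤ d)
    (h0 : (0 : ℂ[X]) ∉ u.roots.map (fun r => p - C r * q))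
    (hfac : ∀ r ∈ u.roots, (p - C r * q).natDegree = max p.natDegree q.natDegree)
    (hQ : q.natDegree = max p.natDegree q.natDegree ∨ u.natDegree = d) :
    (step u d p q).natDegree = d * max p.natDegree q.natDegree := by
  rw [step_natDegree hu hq h0]
  have hsum : ((u.roots.map (fun r => (p - C r * q).natDegree)).sum) =
      u.natDegree * max p.natDegree q.natDegree := by
    rw [Multiset.map_congr rfl (fun r hr => hfac r hr)]
    simp [Multiset.map_const', card_roots_eq, mul_comm]
  rw [hsum]
  set M := max p.natDegree q.natDegree with hM
  rcases hQ with h | h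
  · rw [h, ← Nat.add_mul]
    congr 1
    omega
  · rw [h]
    simp

lemma deg_factor_lt (hQP : q.natDegree < p.natDegree) (r : ℂ) :
    (p - C r * q).natDegree = p.natDegree := by
  refine natDegree_sub_eq_left_of_natDegree_lt ?_
  exact lt_of_le_of_lt (natDegree_mul_le.trans (by simp)) hQP

lemma deg_factor_ne (hPQ : p.natDegree ≤ q.natDegree) (hq : q ≠ 0) {r : ℂ}
    (hr : p.coeff q.natDegree - r * q.leadingCoeff ≠ 0) :
    (p - C r * q).natDegree = q.natDegree := by
  refine le_antisymm ((natDegree_sub_le _ _).trans (max_le hPQ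
    (natDegree_mul_le.trans (by simp)))) (le_natDegree_of_ne_zero ?_)
  rw [coeff_sub, coeff_C_mul, coeff_natDegree]
  exact hr

-- the algebraMap identity
lemma step_algebraMap (hu : u ≠ 0) (hq : q ≠ 0) (hdu : u.natDegree ≤ d) :
    algebraMap ℂ[X] (RatFunc ℂ)
        (C u.leadingCoeff * q ^ (d - u.natDegree) *
          (u.roots.map (fun r => p - C r * q)).prod) =
      Polynomial.aeval (algebraMap ℂ[X] (RatFunc ℂ) p / algebraMap ℂ[X] (RatFunc ℂ) q) u *
        (algebraMap ℂ[X] (RatFunc ℂ) q) ^ d := by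
  set aM := algebraMap ℂ[X] (RatFunc ℂ) with haM
  set g := aM p / aM q with hg
  have haQ : aM q ≠ 0 := RatFunc.algebraMap_ne_zero hq
  have hgq : g * aM q = aM p := div_mul_cancel₀ _ haQ
  have hcard : Multiset.card u.roots = u.natDegree :=
    Polynomial.splits_iff_card_roots.mp (IsAlgClosed.splits u)
  have hCalg : ∀ c : ℂ, algebraMap ℂ (RatFunc ℂ) c = aM (C c) := by
    intro c
    rw [IsScalarTower.algebraMap_apply ℂ ℂ[X] (RatFunc ℂ), Polynomial.algebraMap_eq]
  have haev : Polynomial.aeval g u =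
      aM (C u.leadingCoeff) * (u.roots.map (fun r => g - aM (C r))).prod := by
    conv_lhs => rw [(C_leadingCoeff_mul_prod_multiset_X_sub_C hcard).symm]
    rw [map_mul, aeval_C, map_multiset_prod, Multiset.map_map, hCalg]
    congr 1
    apply congrArg
    refine Multiset.map_congr rfl ?_
    intro r _
    simp only [Function.comp_apply, map_sub, aeval_X, aeval_C, hCalg]
  have key : (u.roots.map (fun r => g - aM (C r))).prod * (aM q) ^ u.natDegree =
      (u.roots.map (fun r => aM (p - C r * q))).prod := by
    rw [← hcard, show (aM q) ^ (Multiset.card u.roots) =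
        (u.roots.map (fun _ => aM q)).prod from by
      rw [Multiset.map_const', Multiset.prod_replicate], ← Multiset.prod_map_mul]
    apply congrArg
    refine Multiset.map_congr rfl ?_
    intro r _
    rw [map_sub, map_mul, sub_mul, hgq]
  calc aM (C u.leadingCoeff * q ^ (d - u.natDegree) *
          (u.roots.map (fun r => p - C r * q)).prod)
      = aM (C u.leadingCoeff) * (aM q) ^ (d - u.natDegree) *
          (u.roots.map (fun r => aM (p - C r * q))).prod := by
        rw [map_mul, map_mul, map_pow, map_multiset_prod, Multiset.map_map]
        rfl
    _ = aM (C u.leadingCoeff) * (aM q) ^ (d - u.natDegree) *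
          ((u.roots.map (fun r => g - aM (C r))).prod * (aM q) ^ u.natDegree) := by
        rw [key]
    _ = (aM (C u.leadingCoeff) * (u.roots.map (fun r => g - aM (C r))).prod) *
          ((aM q) ^ (d - u.natDegree) * (aM q) ^ u.natDegree) := by ring
    _ = Polynomial.aeval g u * (aM q) ^ d := by
        rw [haev, ← pow_add]
        congr 2
        omega



lemma rm_eq_of_div_eq (x : RatFunc ℂ) (hp : p ≠ 0) (hq : q ≠ 0) (hcop : IsCoprime p q)
    (hx : algebraMap ℂ[X] (RatFunc ℂ) p / algebraMap ℂ[X] (RatFunc ℂ) q = x) (z : ℂ) :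
    rootMultiplicity z (x.num * x.denom) = rootMultiplicity z (p * q) := by
  have hND : IsCoprime x.num x.denom := RatFunc.isCoprime_num_denom x
  have hD : x.denom ≠ 0 := x.denom_ne_zero
  have hcross : x.num * q = p * x.denom := by
    have h1 : algebraMap ℂ[X] (RatFunc ℂ) x.num / algebraMap ℂ[X] (RatFunc ℂ) x.denom =
        algebraMap ℂ[X] (RatFunc ℂ) p / algebraMap ℂ[X] (RatFunc ℂ) q := by
      rw [RatFunc.num_div_denom, hx]
    rw [div_eq_div_iff (RatFunc.algebraMap_ne_zero hD) (RatFunc.algebraMap_ne_zero hq)] at h1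
    exact RatFunc.algebraMap_injective ℂ (by rw [map_mul, map_mul, h1])
  have h1 : p ∣ x.num := hcop.dvd_of_dvd_mul_right ⟨x.denom, by linear_combination hcross⟩
  have h2 : x.num ∣ p := hND.dvd_of_dvd_mul_right ⟨q, by linear_combination -hcross⟩
  have h3 : q ∣ x.denom := hcop.symm.dvd_of_dvd_mul_right ⟨x.num, by linear_combination -hcross⟩
  have h4 : x.denom ∣ q := hND.symm.dvd_of_dvd_mul_right ⟨p, by linear_combination hcross⟩
  have hassoc : Associated (x.num * x.denom) (p * q) :=
    (associated_of_dvd_dvd h2 h1).mul_mul (associated_of_dvd_dvd h4 h3)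
  obtain ⟨un, hun⟩ := hassoc
  obtain ⟨r, hru, hrC⟩ := Polynomial.isUnit_iff.mp un.isUnit
  have heq : p * q = x.num * x.denom * C r := by rw [hrC, hun]
  have h5 : x.num * x.denom * C r ≠ 0 := by rw [← heq]; exact mul_ne_zero hp hq
  rw [heq, rootMultiplicity_mul h5, rootMultiplicity_C, add_zero]

lemma step_eval (w : ℂ) :
    (C u.leadingCoeff * q ^ (d - u.natDegree) *
      (u.roots.map (fun r => p - C r * q)).prod).eval w =
    u.leadingCoeff * (q.eval w) ^ (d - u.natDegree) *
      ((u.roots.map (fun r => p.eval w - r * q.eval w)).prod) := by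
  rw [eval_mul, eval_mul, eval_C, eval_pow, eval_multiset_prod, Multiset.map_map]
  congr 2
  refine Multiset.map_congr rfl ?_
  intro r _
  simp

lemma step_eval' (w : ℂ) :
    (step u d p q).eval w =
    u.leadingCoeff * (q.eval w) ^ (d - u.natDegree) *
      ((u.roots.map (fun r => p.eval w - r * q.eval w)).prod) :=
  step_eval w

lemma step_algebraMap' (hu : u ≠ 0) (hq : q ≠ 0) (hdu : u.natDegree ≤ d) :
    algebraMap ℂ[X] (RatFunc ℂ) (step u d p q) =
      Polynomial.aeval (algebraMap ℂ[X] (RatFunc ℂ) p / algebraMap ℂ[X] (RatFunc ℂ) q) u *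
        (algebraMap ℂ[X] (RatFunc ℂ) q) ^ d :=
  step_algebraMap hu hq hdu

lemma step_coprime' (hu : u ≠ 0) (hv : v ≠ 0) (huv : IsCoprime u v)
    (hd : max u.natDegree v.natDegree = d)
    (hp : p ≠ 0) (hq : q ≠ 0) (hcop : IsCoprime p q)
    (hM : 1 ≤ max p.natDegree q.natDegree) :
    IsCoprime (step u d p q) (step v d p q) := by
  refine coprime_of_no_common_root (step_ne_zero hu hq hcop hM) ?_
  intro z hz1 hz2
  rw [step_eval'] at hz1 hz2
  by_cases hqz : q.eval z = 0
  · have hpz : p.eval z ≠ 0 := no_common_root hcop.symm hqz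
    have hprod : ∀ w : ℂ[X], ((w.roots.map (fun r => p.eval z - r * q.eval z)).prod) ≠ 0 := by
      intro w
      refine Multiset.prod_ne_zero ?_
      intro h0
      obtain ⟨r, _, hr⟩ := Multiset.mem_map.mp h0
      rw [hqz, mul_zero, sub_zero] at hr
      exact hpz (by rw [hr])
    have hcu : u.leadingCoeff ≠ 0 := leadingCoeff_ne_zero.mpr hu
    have hcv : v.leadingCoeff ≠ 0 := leadingCoeff_ne_zero.mpr hv
    have h1 : (q.eval z : ℂ) ^ (d - u.natDegree) = 0 := by
      rcases mul_eq_zero.mp hz1 with h | h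
      · rcases mul_eq_zero.mp h with h' | h'
        · exact absurd h' hcu
        · exact h'
      · exact absurd h (hprod u)
    have h2 : (q.eval z : ℂ) ^ (d - v.natDegree) = 0 := by
      rcases mul_eq_zero.mp hz2 with h | h
      · rcases mul_eq_zero.mp h with h' | h'
        · exact absurd h' hcv
        · exact h'
      · exact absurd h (hprod v)
    have hu' : u.natDegree < d := by
      by_contra hge
      push_neg at hge
      have hz0 : d - u.natDegree = 0 := by omega
      rw [hz0, pow_zero] at h1
      exact one_ne_zero h1
    have hv' : v.natDegree < d := by
      by_contra hge
      push_neg at hge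
      have hz0 : d - v.natDegree = 0 := by omega
      rw [hz0, pow_zero] at h2
      exact one_ne_zero h2
    rcases max_choice u.natDegree v.natDegree with hmc | hmc <;> rw [hmc] at hd <;> omega
  · have hcu : u.leadingCoeff ≠ 0 := leadingCoeff_ne_zero.mpr hu
    have hcv : v.leadingCoeff ≠ 0 := leadingCoeff_ne_zero.mpr hv
    have hpow : (q.eval z : ℂ) ^ (d - u.natDegree) ≠ 0 := pow_ne_zero _ hqz
    have hpow' : (q.eval z : ℂ) ^ (d - v.natDegree) ≠ 0 := pow_ne_zero _ hqz
    have h1 : ((u.roots.map (fun r => p.eval z - r * q.eval z)).prod) = 0 := by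
      rcases mul_eq_zero.mp hz1 with h | h
      · rcases mul_eq_zero.mp h with h' | h'
        · exact absurd h' hcu
        · exact absurd h' hpow
      · exact h
    have h2 : ((v.roots.map (fun r => p.eval z - r * q.eval z)).prod) = 0 := by
      rcases mul_eq_zero.mp hz2 with h | h
      · rcases mul_eq_zero.mp h with h' | h'
        · exact absurd h' hcv
        · exact absurd h' hpow'
      · exact h
    obtain ⟨x, hxmem, hx⟩ := Multiset.mem_map.mp (Multiset.prod_eq_zero_iff.mp h1)
    obtain ⟨y, hymem, hy⟩ := Multiset.mem_map.mp (Multiset.prod_eq_zero_iff.mp h2)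
    have hxy : x = y := by
      have hx' : p.eval z = x * q.eval z := by linear_combination hx
      have hy' : p.eval z = y * q.eval z := by linear_combination hy
      have : (x - y) * q.eval z = 0 := by linear_combination hy' - hx'
      rcases mul_eq_zero.mp this with h | h
      · exact sub_eq_zero.mp h
      · exact absurd h hqz
    have hxu : u.IsRoot x := isRoot_of_mem_roots hxmem
    have hyv : v.IsRoot y := isRoot_of_mem_roots hymem
    exact no_common_root huv hxu (hxy ▸ hyv)

lemma step_max_natDegree (hu : u ≠ 0) (hv : v ≠ 0) (huv : IsCoprime u v)
    (hd : max u.natDegree v.natDegree = d)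
    (hp : p ≠ 0) (hq : q ≠ 0) (hcop : IsCoprime p q)
    (hM : 1 ≤ max p.natDegree q.natDegree) :
    max (step u d p q).natDegree (step v d p q).natDegree =
      d * max p.natDegree q.natDegree := by
  have hdu : u.natDegree ≤ d := le_trans (le_max_left _ _) hd.le
  have hdv : v.natDegree ≤ d := le_trans (le_max_right _ _) hd.le
  have h0u := zero_not_mem_factors (u := u) hcop hM
  have h0v := zero_not_mem_factors (u := v) hcop hM
  have hleu : (step u d p q).natDegree ≤ d * max p.natDegree q.natDegree :=
    step_natDegree_le hu hq hdu h0u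
  have hlev : (step v d p q).natDegree ≤ d * max p.natDegree q.natDegree :=
    step_natDegree_le hv hq hdv h0v
  have hex : (step u d p q).natDegree = d * max p.natDegree q.natDegree ∨
      (step v d p q).natDegree = d * max p.natDegree q.natDegree := by
    by_cases hcase : q.natDegree < p.natDegree
    · have hfac : ∀ w : ℂ[X], ∀ r ∈ w.roots,
          (p - C r * q).natDegree = max p.natDegree q.natDegree := by
        intro w r _
        rw [max_eq_left hcase.le]
        exact deg_factor_lt hcase r
      rcases max_choice u.natDegree v.natDegree with h | h
      · exact Or.inl (step_natDegree_exact hu hq hdu h0u (hfac u) (Or.inr (by omega)))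
      · exact Or.inr (step_natDegree_exact hv hq hdv h0v (hfac v) (Or.inr (by omega)))
    · push_neg at hcase
      have hqM : q.natDegree = max p.natDegree q.natDegree := (max_eq_right hcase).symm
      have hlq : q.leadingCoeff ≠ 0 := leadingCoeff_ne_zero.mpr hq
      set rho := p.coeff q.natDegree / q.leadingCoeff with hrho
      have key : ∀ w : ℂ[X], ¬ w.IsRoot rho → ∀ r ∈ w.roots,
          (p - C r * q).natDegree = max p.natDegree q.natDegree := by
        intro w hw r hr
        have hrρ : r ≠ rho := fun h => hw (h ▸ isRoot_of_mem_roots hr)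
        rw [← hqM]
        refine deg_factor_ne hcase hq ?_
        intro h0
        refine absurd ?_ hrρ
        rw [hrho]
        field_simp
        linear_combination -h0
      by_cases hρu : u.IsRoot rho
      · have hρv : ¬ v.IsRoot rho := no_common_root huv hρu
        exact Or.inr (step_natDegree_exact hv hq hdv h0v (key v hρv) (Or.inl hqM))
      · exact Or.inl (step_natDegree_exact hu hq hdu h0u (key u hρu) (Or.inl hqM))
  rcases hex with h | h
  · rw [h]; exact max_eq_left hlev
  · rw [h]; exact max_eq_right hleu


lemma natDegree_sum_rm (f : ℂ[X]) :
    f.natDegree = ∑ w ∈ f.roots.toFinset, rootMultiplicity w f := by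
  classical
  conv_lhs => rw [← card_roots_eq f]
  rw [← Multiset.toFinset_sum_count_eq]
  exact Finset.sum_congr rfl fun w _ => Polynomial.count_roots f

lemma bad_finset (f : ℂ[X]) {B : ℕ}
    (h : {z : ℂ | ¬ (4 ∣ rootMultiplicity z f)}.ncard ≤ B) :
    ∃ bad : Finset ℂ, bad.card ≤ B ∧ ∀ z : ℂ, z ∉ bad → 4 ∣ rootMultiplicity z f := by
  classical
  set S := {z : ℂ | ¬ (4 ∣ rootMultiplicity z f)} with hS
  have hsub : S ⊆ ↑f.roots.toFinset := by
    intro z hz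
    by_contra hmem
    apply hz
    have h0 : rootMultiplicity z f = 0 := by
      by_cases hf : f = 0
      · simp [hf]
      · exact rootMultiplicity_eq_zero
          (fun hr => hmem (Multiset.mem_toFinset.mpr (mem_roots'.mpr ⟨hf, hr⟩)))
    rw [h0]
    exact dvd_zero 4
  have hfin : S.Finite := Set.Finite.subset (f.roots.toFinset).finite_toSet hsub
  refine ⟨hfin.toFinset, ?_, ?_⟩
  · calc hfin.toFinset.card = S.ncard := (Set.ncard_eq_toFinset_card S hfin).symm
      _ ≤ B := h
  · intro z hz
    by_contra h4
    exact hz (hfin.mem_toFinset.mpr h4)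

lemma main (φ : RatFunc ℂ) (d : ℕ)
    (hd : d = max φ.num.natDegree φ.denom.natDegree)
    (hd2 : 2 ≤ d)
    (Φ : ℕ → RatFunc ℂ)
    (hΦ0 : Φ 0 = RatFunc.X)
    (hΦ : ∀ n, Φ (n + 1) =
      Polynomial.aeval (Φ n) φ.num / Polynomial.aeval (Φ n) φ.denom)
    (hbd : ∃ B : ℕ, ∀ n : ℕ, 1 ≤ n →
      {z : ℂ | ¬ (4 ∣ Polynomial.rootMultiplicity z
        ((Φ n).num * (Φ n).denom))}.ncard ≤ B) :
    {z : ℂ | z ≠ 0 ∧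
      ¬ (4 ∣ Polynomial.rootMultiplicity z (φ.num * φ.denom))}.Subsingleton := by
  classical
  obtain ⟨B, hB⟩ := hbd
  intro a ha b hb
  by_contra hab
  obtain ⟨ha0, ham⟩ := ha
  obtain ⟨hb0, hbm⟩ := hb
  set u := φ.num with hu_def
  set v := φ.denom with hv_def
  have huv0 : u * v ≠ 0 := fun h => ham (by rw [h, rootMultiplicity_zero]; exact dvd_zero 4)
  have hu0 : u ≠ 0 := left_ne_zero_of_mul huv0
  have hv0 : v ≠ 0 := right_ne_zero_of_mul huv0
  have huv : IsCoprime u v := φ.isCoprime_num_denom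
  have hdmax : max u.natDegree v.natDegree = d := hd.symm
  -- the iteration of coprime polynomial pairs
  set pq : ℕ → ℂ[X] × ℂ[X] := fun n => Nat.rec ((Polynomial.X : ℂ[X]), (1 : ℂ[X]))
      (fun _ ih => (step u d ih.1 ih.2, step v d ih.1 ih.2)) n with hpq_def
  have key : ∀ n : ℕ, (pq n).1 ≠ 0 ∧ (pq n).2 ≠ 0 ∧ IsCoprime (pq n).1 (pq n).2 ∧
      max (pq n).1.natDegree (pq n).2.natDegree = d ^ n ∧
      algebraMap ℂ[X] (RatFunc ℂ) (pq n).1 / algebraMap ℂ[X] (RatFunc ℂ) (pq n).2 = Φ n := by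
    intro n
    induction n with
    | zero =>
      refine ⟨X_ne_zero, one_ne_zero, isCoprime_one_right, by
        show (Polynomial.X : ℂ[X]).natDegree ⊔ (1 : ℂ[X]).natDegree = d ^ 0
        simp, ?_⟩
      show algebraMap ℂ[X] (RatFunc ℂ) X / algebraMap ℂ[X] (RatFunc ℂ) 1 = Φ 0
      rw [hΦ0, map_one, div_one, RatFunc.algebraMap_X]
    | succ n ih =>
      obtain ⟨hp, hq, hcop, hdeg, hphi⟩ := ih
      have hM : 1 ≤ max (pq n).1.natDegree (pq n).2.natDegree := by
        rw [hdeg]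
        exact Nat.one_le_pow _ _ (by omega)
      refine ⟨step_ne_zero hu0 hq hcop hM, step_ne_zero hv0 hq hcop hM,
        step_coprime' hu0 hv0 huv hdmax hp hq hcop hM, ?_, ?_⟩
      · show max (step u d (pq n).1 (pq n).2).natDegree
            (step v d (pq n).1 (pq n).2).natDegree = d ^ (n + 1)
        rw [step_max_natDegree hu0 hv0 huv hdmax hp hq hcop hM, hdeg, pow_succ, mul_comm]
      · show algebraMap ℂ[X] (RatFunc ℂ) (step u d (pq n).1 (pq n).2) /
            algebraMap ℂ[X] (RatFunc ℂ) (step v d (pq n).1 (pq n).2) = Φ (n + 1)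
        rw [hΦ n, ← hphi,
          step_algebraMap' hu0 hq (le_trans (le_max_left _ _) hdmax.le),
          step_algebraMap' hv0 hq (le_trans (le_max_right _ _) hdmax.le),
          mul_div_mul_comm, div_self (pow_ne_zero _ (RatFunc.algebraMap_ne_zero hq)), mul_one]
  -- choose n large
  set n := 12 * B + 1 with hn
  obtain ⟨hp, hq, hcop, hdeg, hphi⟩ := key n
  obtain ⟨hp2, hq2, hcop2, hdeg2, hphi2⟩ := key (n + 1)
  set p := (pq n).1 with hp_def
  set q := (pq n).2 with hq_def
  have hdn : 12 * B + 1 < d ^ n := by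
    calc 12 * B + 1 = n := rfl
      _ < 2 ^ n := Nat.lt_two_pow_self
      _ ≤ d ^ n := Nat.pow_le_pow_left (by omega) n
  have hM : 1 ≤ max p.natDegree q.natDegree := by rw [hdeg]; omega
  have hSmax : max p.natDegree q.natDegree ≤ p.natDegree + q.natDegree :=
    max_le (Nat.le_add_right _ _) (Nat.le_add_left _ _)
  -- bad finsets at level n and n+1
  have hbadn := hB n (by omega)
  have hsetn : {z : ℂ | ¬ (4 ∣ rootMultiplicity z ((Φ n).num * (Φ n).denom))}
      = {z : ℂ | ¬ (4 ∣ rootMultiplicity z (p * q))} := by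
    ext z
    simp only [Set.mem_setOf_eq]
    rw [rm_eq_of_div_eq (Φ n) hp hq hcop hphi z]
  rw [hsetn] at hbadn
  obtain ⟨bad1, hbad1card, hbad1⟩ := bad_finset _ hbadn
  have hbadn2 := hB (n + 1) (by omega)
  have hsetn2 : {z : ℂ | ¬ (4 ∣ rootMultiplicity z ((Φ (n + 1)).num * (Φ (n + 1)).denom))}
      = {z : ℂ | ¬ (4 ∣ rootMultiplicity z ((pq (n + 1)).1 * (pq (n + 1)).2))} := by
    ext z
    simp only [Set.mem_setOf_eq]
    rw [rm_eq_of_div_eq (Φ (n + 1)) hp2 hq2 hcop2 hphi2 z]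
  rw [hsetn2] at hbadn2
  obtain ⟨bad2, hbad2card, hbad2⟩ := bad_finset _ hbadn2
  -- fibers
  have hfa0 : p - C a * q ≠ 0 := factor_ne_zero hcop hM a
  have hfb0 : p - C b * q ≠ 0 := factor_ne_zero hcop hM b
  have hpq0' : p * q ≠ 0 := mul_ne_zero hp hq
  -- count over the fiber of {0, ∞}
  have hc1 : 4 * (p * q).roots.toFinset.card ≤ 4 * bad1.card + (p * q).natDegree := by
    refine fiber_count _ hpq0' bad1 4 ?_
    intro w hw hwb
    exact Nat.le_of_dvd ((rootMultiplicity_pos hpq0').mpr hw) (hbad1 w hwb)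
  -- the multiplicity of fiber points of a (and b) in the next iterate
  have hma : ∀ c : ℂ, c ≠ 0 → ∀ w : ℂ, (p - C c * q).eval w = 0 →
      rootMultiplicity w ((pq (n + 1)).1 * (pq (n + 1)).2) =
        rootMultiplicity c (u * v) * rootMultiplicity w (p - C c * q) := by
    intro c _ w hw
    have hw' : p.eval w = c * q.eval w := by
      have := hw
      simp only [eval_sub, eval_mul, eval_C] at this
      linear_combination this
    have hqw : q.eval w ≠ 0 := by
      intro hq0
      have hpw : p.eval w = 0 := by rw [hw', hq0, mul_zero]
      exact no_common_root hcop hpw hq0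
    have e1 : (pq (n + 1)).1 = step u d p q := rfl
    have e2 : (pq (n + 1)).2 = step v d p q := rfl
    rw [e1, e2, rootMultiplicity_mul (by rw [← e1, ← e2]; exact mul_ne_zero hp2 hq2),
      step_rootMult hu0 hq hcop hM hqw hw', step_rootMult hv0 hq hcop hM hqw hw',
      rootMultiplicity_mul huv0, add_mul]
  have hfibc : ∀ c : ℂ, c ≠ 0 → (¬ (4 ∣ rootMultiplicity c (u * v))) →
      ∀ hfc : p - C c * q ≠ 0,
      2 * (p - C c * q).roots.toFinset.card ≤ 2 * bad2.card + (p - C c * q).natDegree := by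
    intro c hc hcm hfc
    refine fiber_count _ hfc bad2 2 ?_
    intro w hw hwb
    have h4 : 4 ∣ rootMultiplicity c (u * v) * rootMultiplicity w (p - C c * q) := by
      rw [← hma c hc w hw]
      exact hbad2 w hwb
    have he1 : 1 ≤ rootMultiplicity w (p - C c * q) := (rootMultiplicity_pos hfc).mpr hw
    by_contra hlt
    push_neg at hlt
    have he : rootMultiplicity w (p - C c * q) = 1 := by omega
    rw [he, mul_one] at h4
    exact hcm h4
  have hc2 := hfibc a ha0 ham hfa0
  have hc3 := hfibc b hb0 hbm hfb0
  -- the wronskian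
  have hW0 : p * derivative q - derivative p * q ≠ 0 := by
    intro h
    have hpq' : p * derivative q = derivative p * q := sub_eq_zero.mp h
    have hdvd : p ∣ derivative p :=
      hcop.dvd_of_dvd_mul_right (⟨derivative q, by linear_combination -hpq'⟩ :
        p ∣ derivative p * q)
    by_cases hp' : derivative p = 0
    · have hq' : derivative q = 0 := by
        rcases mul_eq_zero.mp (show p * derivative q = 0 by rw [hpq', hp', zero_mul]) with h' | h'
        · exact absurd h' hp
        · exact h'
      have h1 : p.natDegree = 0 := natDegree_eq_zero_of_derivative_eq_zero hp'
      have h2 : q.natDegree = 0 := natDegree_eq_zero_of_derivative_eq_zero hq'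
      omega
    · have h1 : p.natDegree ≤ (derivative p).natDegree := natDegree_le_of_dvd hdvd hp'
      have h2 := natDegree_derivative_le p
      have h3 : p.natDegree = 0 := by omega
      obtain ⟨c, hc⟩ := natDegree_eq_zero.mp h3
      rw [← hc, derivative_C] at hp'
      exact hp' rfl
  have hdegW1 : (p * derivative q - derivative p * q).natDegree + 1 ≤
      p.natDegree + q.natDegree := by
    have h1 := wronskian_deg p q
    omega
  have hTa1 : 1 ≤ (p - C a * q).natDegree + (p - C b * q).natDegree := by
    by_contra hcon
    push_neg at hcon
    have hKa : (p - C a * q).natDegree = 0 := by omega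
    have hKb : (p - C b * q).natDegree = 0 := by omega
    have hba : (b - a : ℂ) ≠ 0 := sub_ne_zero.mpr (fun h => hab h.symm)
    have hq_eq : C ((b - a)⁻¹) * ((p - C a * q) - (p - C b * q)) = q := by
      rw [show (p - C a * q) - (p - C b * q) = C (b - a) * q from by rw [C_sub]; ring,
        ← mul_assoc, ← C_mul, inv_mul_cancel₀ hba, C_1, one_mul]
    have hqdeg : q.natDegree = 0 := by
      have h1 : (C ((b - a)⁻¹) * ((p - C a * q) - (p - C b * q))).natDegree ≤
          ((p - C a * q) - (p - C b * q)).natDegree := natDegree_C_mul_le _ _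
      have h2 : ((p - C a * q) - (p - C b * q)).natDegree ≤
          max (p - C a * q).natDegree (p - C b * q).natDegree := natDegree_sub_le _ _
      rw [hq_eq] at h1
      have h3 : max (p - C a * q).natDegree (p - C b * q).natDegree ≤ 0 := by
        rw [hKa, hKb]
        simp
      omega
    have hpdeg : p.natDegree = 0 := by
      have h1 : p = (p - C a * q) + C a * q := by ring
      have h2 : p.natDegree ≤ max (p - C a * q).natDegree (C a * q).natDegree := by
        conv_lhs => rw [h1]
        exact natDegree_add_le _ _
      have h3 : (C a * q).natDegree ≤ q.natDegree := natDegree_C_mul_le _ _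
      omega
    omega
  have hdegW2 : (p * derivative q - derivative p * q).natDegree + 1 ≤
      (p - C a * q).natDegree + (p - C b * q).natDegree := by
    have hWab : C (a - b) * (p * derivative q - derivative p * q) =
        (p - C a * q) * derivative (p - C b * q) -
          derivative (p - C a * q) * (p - C b * q) := by
      rw [derivative_sub, derivative_sub, derivative_C_mul, derivative_C_mul, C_sub]
      ring
    have h1 : (C (a - b) * (p * derivative q - derivative p * q)).natDegree =
        (p * derivative q - derivative p * q).natDegree :=
      natDegree_C_mul (sub_ne_zero.mpr hab)
    have h2 := wronskian_deg (p - C a * q) (p - C b * q)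
    rw [hWab] at h1
    omega
  -- assemble the master inequality
  set F := p * q * ((p - C a * q) * (p - C b * q)) with hF_def
  have hfafb0 : (p - C a * q) * (p - C b * q) ≠ 0 := mul_ne_zero hfa0 hfb0
  have hF0 : F ≠ 0 := mul_ne_zero hpq0' hfafb0
  have hPQdeg : (p * q).natDegree = p.natDegree + q.natDegree := natDegree_mul hp hq
  have hFdeg : F.natDegree = p.natDegree + q.natDegree +
      ((p - C a * q).natDegree + (p - C b * q).natDegree) := by
    rw [hF_def, natDegree_mul hpq0' hfafb0, natDegree_mul hp hq, natDegree_mul hfa0 hfb0]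
  have hrootsF : F.roots = (p * q).roots +
      ((p - C a * q).roots + (p - C b * q).roots) := by
    rw [hF_def, roots_mul (by rw [← hF_def]; exact hF0), roots_mul hfafb0]
  have hrmF : ∀ w : ℂ, rootMultiplicity w F = rootMultiplicity w p + rootMultiplicity w q +
      (rootMultiplicity w (p - C a * q) + rootMultiplicity w (p - C b * q)) := by
    intro w
    rw [hF_def, rootMultiplicity_mul (by rw [← hF_def]; exact hF0),
      rootMultiplicity_mul hpq0', rootMultiplicity_mul hfafb0]
  have hdvdW : ∀ w ∈ F.roots.toFinset, (X - C w) ^ (rootMultiplicity w F - 1) ∣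
      (p * derivative q - derivative p * q) := by
    intro w hw
    have hwroot : F.eval w = 0 := isRoot_of_mem_roots (Multiset.mem_toFinset.mp hw)
    by_cases hpw : p.eval w = 0
    · have hqw : q.eval w ≠ 0 := no_common_root hcop hpw
      have hfaw : (p - C a * q).eval w ≠ 0 := by
        simp only [eval_sub, eval_mul, eval_C, hpw, zero_sub]
        exact neg_ne_zero.mpr (mul_ne_zero ha0 hqw)
      have hfbw : (p - C b * q).eval w ≠ 0 := by
        simp only [eval_sub, eval_mul, eval_C, hpw, zero_sub]
        exact neg_ne_zero.mpr (mul_ne_zero hb0 hqw)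
      have hE : rootMultiplicity w F = rootMultiplicity w p := by
        rw [hrmF w, rootMultiplicity_eq_zero hqw, rootMultiplicity_eq_zero hfaw,
          rootMultiplicity_eq_zero hfbw]
        omega
      rw [hE]
      exact dvd_wronskian_aux (pow_rootMultiplicity_dvd p w)
    · by_cases hqw : q.eval w = 0
      · have hfaw : (p - C a * q).eval w ≠ 0 := by
          simp only [eval_sub, eval_mul, eval_C, hqw, mul_zero, sub_zero]
          exact hpw
        have hfbw : (p - C b * q).eval w ≠ 0 := by
          simp only [eval_sub, eval_mul, eval_C, hqw, mul_zero, sub_zero]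
          exact hpw
        have hE : rootMultiplicity w F = rootMultiplicity w q := by
          rw [hrmF w, rootMultiplicity_eq_zero hpw, rootMultiplicity_eq_zero hfaw,
            rootMultiplicity_eq_zero hfbw]
          omega
        rw [hE]
        have hd1 := dvd_wronskian_aux (g := p) (pow_rootMultiplicity_dvd q w)
        rw [show q * derivative p - derivative q * p =
            -(p * derivative q - derivative p * q) from by ring] at hd1
        exact (dvd_neg).mp hd1
      · by_cases hfaw : (p - C a * q).eval w = 0
        · have hfbw : (p - C b * q).eval w ≠ 0 := by
            have hw' : p.eval w = a * q.eval w := by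
              simp only [eval_sub, eval_mul, eval_C] at hfaw
              linear_combination hfaw
            simp only [eval_sub, eval_mul, eval_C, hw']
            rw [show a * q.eval w - b * q.eval w = (a - b) * q.eval w from by ring]
            exact mul_ne_zero (sub_ne_zero.mpr hab) hqw
          have hE : rootMultiplicity w F = rootMultiplicity w (p - C a * q) := by
            rw [hrmF w, rootMultiplicity_eq_zero hpw, rootMultiplicity_eq_zero hqw,
              rootMultiplicity_eq_zero hfbw]
            omega
          rw [hE]
          have hd1 := dvd_wronskian_aux (g := q) (pow_rootMultiplicity_dvd (p - C a * q) w)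
          rw [show (p - C a * q) * derivative q - derivative (p - C a * q) * q =
              p * derivative q - derivative p * q from by
            rw [derivative_sub, derivative_C_mul]; ring] at hd1
          exact hd1
        · have hfbw : (p - C b * q).eval w = 0 := by
            have := hwroot
            rw [hF_def] at this
            simp only [eval_mul] at this
            rcases mul_eq_zero.mp this with h' | h'
            · rcases mul_eq_zero.mp h' with h'' | h''
              · exact absurd h'' hpw
              · exact absurd h'' hqw
            · rcases mul_eq_zero.mp h' with h'' | h''
              · exact absurd h'' hfaw
              · exact h''
          have hE : rootMultiplicity w F = rootMultiplicity w (p - C b * q) := by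
            rw [hrmF w, rootMultiplicity_eq_zero hpw, rootMultiplicity_eq_zero hqw,
              rootMultiplicity_eq_zero hfaw]
            omega
          rw [hE]
          have hd1 := dvd_wronskian_aux (g := q) (pow_rootMultiplicity_dvd (p - C b * q) w)
          rw [show (p - C b * q) * derivative q - derivative (p - C b * q) * q =
              p * derivative q - derivative p * q from by
            rw [derivative_sub, derivative_C_mul]; ring] at hd1
          exact hd1
  have hpair : (↑F.roots.toFinset : Set ℂ).Pairwise
      (Function.onFun IsCoprime fun w => (X - C w) ^ (rootMultiplicity w F - 1)) := by
    intro x _ y _ hxy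
    exact (Polynomial.pairwise_coprime_X_sub_C (Function.injective_id (α := ℂ)) hxy).pow
  have hGdvd := Finset.prod_dvd_of_coprime hpair hdvdW
  have hGdeg : (∏ w ∈ F.roots.toFinset, (X - C w) ^ (rootMultiplicity w F - 1)).natDegree =
      ∑ w ∈ F.roots.toFinset, (rootMultiplicity w F - 1) := by
    rw [natDegree_prod _ _ (fun i _ => pow_ne_zero _ (X_sub_C_ne_zero i))]
    exact Finset.sum_congr rfl fun w _ => by rw [natDegree_pow, natDegree_X_sub_C, mul_one]
  have hsumF : F.natDegree ≤ (p * derivative q - derivative p * q).natDegree +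
      F.roots.toFinset.card := by
    have h1 := natDegree_sum_rm F
    have h2 : ∑ w ∈ F.roots.toFinset, rootMultiplicity w F ≤
        (∑ w ∈ F.roots.toFinset, (rootMultiplicity w F - 1)) + F.roots.toFinset.card := by
      rw [Finset.card_eq_sum_ones, ← Finset.sum_add_distrib]
      exact Finset.sum_le_sum (fun i _ => by omega)
    have h3 : (∑ w ∈ F.roots.toFinset, (rootMultiplicity w F - 1)) ≤
        (p * derivative q - derivative p * q).natDegree := by
      rw [← hGdeg]
      exact natDegree_le_of_dvd hGdvd hW0
    omega
  have ht : F.roots.toFinset.card ≤ (p * q).roots.toFinset.card +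
      ((p - C a * q).roots.toFinset.card + (p - C b * q).roots.toFinset.card) := by
    have heq : F.roots.toFinset = (p * q).roots.toFinset ∪
        ((p - C a * q).roots.toFinset ∪ (p - C b * q).roots.toFinset) := by
      rw [hrootsF, Multiset.toFinset_add, Multiset.toFinset_add]
    rw [heq]
    calc ((p * q).roots.toFinset ∪
          ((p - C a * q).roots.toFinset ∪ (p - C b * q).roots.toFinset)).card
        ≤ (p * q).roots.toFinset.card +
          ((p - C a * q).roots.toFinset ∪ (p - C b * q).roots.toFinset).card :=
          Finset.card_union_le _ _
      _ ≤ _ := by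
          have := Finset.card_union_le (p - C a * q).roots.toFinset
            (p - C b * q).roots.toFinset
          omega
  have hdnS : 12 * B + 1 ≤ p.natDegree + q.natDegree := by
    have h1 := hSmax
    rw [hdeg] at h1
    omega
  omega

end
end Blemma


/-- Lemma 5.2 ('blemma') of the paper: for an even-degree rational map with 0 and ∞
4-branch abundant, at most one preimage of {0, ∞} other than 0, ∞ has ramification
index not divisible by 4. -/
theorem stmt_10 (φ : RatFunc ℂ) (d : ℕ)
    (hd : d = max φ.num.natDegree φ.denom.natDegree)
    (hd2 : 2 ≤ d) (heven : Even d)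
    (Φ : ℕ → RatFunc ℂ)
    (hΦ0 : Φ 0 = RatFunc.X)
    (hΦ : ∀ n, Φ (n + 1) =
      Polynomial.aeval (Φ n) φ.num / Polynomial.aeval (Φ n) φ.denom)
    (hbd : ∃ B : ℕ, ∀ n : ℕ, 1 ≤ n →
      {z : ℂ | ¬ (4 ∣ Polynomial.rootMultiplicity z
        ((Φ n).num * (Φ n).denom))}.ncard ≤ B) :
    {z : ℂ | z ≠ 0 ∧
      ¬ (4 ∣ Polynomial.rootMultiplicity z (φ.num * φ.denom))}.Subsingleton := by
  exact Blemma.main φ d hd hd2 Φ hΦ0 hΦ hbd
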